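/- Let m, h > 0 and let V : ℝ → ℝ be differentiable. For all real q_ℓ, q_ξ, q_{1−ξ}, q_r, the two internal Euler–Lagrange equations ∂L_d/∂q_ξ = 0 and ∂L_d/∂q_{1−ξ} = 0 hold simultaneously if and only if q_ξ − (h²/(30m))(V′(q_{1−ξ}) + 2V′(q_ξ)) = ((5+√5)/10) q_ℓ + ((5−√5)/10) q_r and q_{1−ξ} − (h²/(30m))(2V′(q_{1−ξ}) + V′(q_ξ)) = ((5−√5)/10) q_ℓ + ((5+√5)/10) q_r. -/

import Mathlib

/-- The nonlinear discrete Lagrangian with mass `m`, time step `h` and potential `V`. -/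
noncomputable def LdNL (m h : ℝ) (V : ℝ → ℝ) (qℓ qξ q1mξ qr : ℝ) : ℝ :=
  (m / (12 * h)) *
    (26 * (qℓ^2 + qr^2) - 2 * qℓ * qr + 50 * (qξ^2 - qξ * q1mξ + q1mξ^2)
      - 25 * (qℓ + qr) * (qξ + q1mξ)
      - 15 * Real.sqrt 5 * (qℓ - qr) * (qξ - q1mξ))
  - (h/12) * (V qℓ + 5 * (V qξ + V q1mξ) + V qr)

private lemma quad_deriv (a b c : ℝ) (f : ℝ → ℝ) (d : ℝ) (x : ℝ)
    (hf : HasDerivAt f d x) (e : ℝ) :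
    HasDerivAt (fun t : ℝ => a*t^2 + b*t + c - e * f t) (2*a*x + b - e*d) x := by
  have h1 : HasDerivAt (fun t : ℝ => a*t^2 + b*t + c) (2*a*x + b) x := by
    have := ((hasDerivAt_pow 2 x).const_mul a).add (((hasDerivAt_id x).const_mul b).add_const c)
    have h2 : (fun t : ℝ => a*t^2 + b*t + c) = (fun y => a * y ^ 2) + fun x => b * id x + c := by
      funext t; simp only [Pi.add_apply, id]; ring
    rw [h2]
    exact this.congr_deriv (by rw [show (2:ℕ) - 1 = 1 from rfl]; push_cast; ring)
  exact h1.sub (hf.const_mul e)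

/-- The internal Euler–Lagrange equations of the nonlinear Lobatto scheme hold iff the
two stated implicit equations for the internal values hold. -/
theorem internal_EL_nonlinear_iff (m h : ℝ) (hm : 0 < m) (hh : 0 < h)
    (V : ℝ → ℝ) (hV : Differentiable ℝ V) (qℓ qξ q1mξ qr : ℝ) :
    (deriv (fun x => LdNL m h V qℓ x q1mξ qr) qξ = 0
      ∧ deriv (fun y => LdNL m h V qℓ qξ y qr) q1mξ = 0)
    ↔ (qξ - (h^2/(30*m)) * (deriv V q1mξ + 2 * deriv V qξ)
          = ((5 + Real.sqrt 5)/10) * qℓ + ((5 - Real.sqrt 5)/10) * qr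
        ∧ q1mξ - (h^2/(30*m)) * (2 * deriv V q1mξ + deriv V qξ)
          = ((5 - Real.sqrt 5)/10) * qℓ + ((5 + Real.sqrt 5)/10) * qr) := by
  have hm' : m ≠ 0 := ne_of_gt hm
  have hh' : h ≠ 0 := ne_of_gt hh
  set s := Real.sqrt 5 with hs
  have hv1 : HasDerivAt V (deriv V qξ) qξ := (hV qξ).hasDerivAt
  have hv2 : HasDerivAt V (deriv V q1mξ) q1mξ := (hV q1mξ).hasDerivAt
  have hd1 : deriv (fun x => LdNL m h V qℓ x q1mξ qr) qξ
      = (m/(12*h)) * (100*qξ - 50*q1mξ - 25*(qℓ+qr) - 15*s*(qℓ-qr))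
        - (5*h/12) * deriv V qξ := by
    have h1 := quad_deriv (m/(12*h)*50)
      (m/(12*h) * (-50*q1mξ - 25*(qℓ+qr) - 15*s*(qℓ-qr)))
      ((m/(12*h)) * (26*(qℓ^2+qr^2) - 2*qℓ*qr + 50*q1mξ^2 - 25*(qℓ+qr)*q1mξ
        + 15*s*(qℓ-qr)*q1mξ) - (h/12)*(V qℓ + 5*V q1mξ + V qr))
      V (deriv V qξ) qξ hv1 (5*h/12)
    have heq : (fun x => LdNL m h V qℓ x q1mξ qr)
        = fun t : ℝ => (m/(12*h)*50)*t^2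
            + (m/(12*h) * (-50*q1mξ - 25*(qℓ+qr) - 15*s*(qℓ-qr)))*t
            + ((m/(12*h)) * (26*(qℓ^2+qr^2) - 2*qℓ*qr + 50*q1mξ^2 - 25*(qℓ+qr)*q1mξ
              + 15*s*(qℓ-qr)*q1mξ) - (h/12)*(V qℓ + 5*V q1mξ + V qr))
            - (5*h/12) * V t := by
      funext t; unfold LdNL; ring
    rw [heq, h1.deriv]; ring
  have hd2 : deriv (fun y => LdNL m h V qℓ qξ y qr) q1mξ
      = (m/(12*h)) * (100*q1mξ - 50*qξ - 25*(qℓ+qr) + 15*s*(qℓ-qr))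
        - (5*h/12) * deriv V q1mξ := by
    have h1 := quad_deriv (m/(12*h)*50)
      (m/(12*h) * (-50*qξ - 25*(qℓ+qr) + 15*s*(qℓ-qr)))
      ((m/(12*h)) * (26*(qℓ^2+qr^2) - 2*qℓ*qr + 50*qξ^2 - 25*(qℓ+qr)*qξ
        - 15*s*(qℓ-qr)*qξ) - (h/12)*(V qℓ + 5*V qξ + V qr))
      V (deriv V q1mξ) q1mξ hv2 (5*h/12)
    have heq : (fun y => LdNL m h V qℓ qξ y qr)
        = fun t : ℝ => (m/(12*h)*50)*t^2
            + (m/(12*h) * (-50*qξ - 25*(qℓ+qr) + 15*s*(qℓ-qr)))*t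
            + ((m/(12*h)) * (26*(qℓ^2+qr^2) - 2*qℓ*qr + 50*qξ^2 - 25*(qℓ+qr)*qξ
              - 15*s*(qℓ-qr)*qξ) - (h/12)*(V qℓ + 5*V qξ + V qr))
            - (5*h/12) * V t := by
      funext t; unfold LdNL; ring
    rw [heq, h1.deriv]; ring
  rw [hd1, hd2]
  constructor
  · rintro ⟨e1, e2⟩
    constructor
    · field_simp at e1 e2 ⊢
      linear_combination (4:ℝ) * e1 + (2:ℝ) * e2
    · field_simp at e1 e2 ⊢
      linear_combination (2:ℝ) * e1 + (4:ℝ) * e2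
  · rintro ⟨f1, f2⟩
    constructor
    · field_simp at f1 f2 ⊢
      linear_combination (1/3:ℝ) * f1 - (1/6:ℝ) * f2
    · field_simp at f1 f2 ⊢
      linear_combination (1/3:ℝ) * f2 - (1/6:ℝ) * f1
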